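/- Let M = (S, A, X, T, i) be a parametric MDP with induced POMDP M', let p ∈ Dist(X) be a parameter distribution, r : Runs_X → ℝ a measurable objective function, r' = r ∘ f⁻¹, i'(s,x) = i(s)·p(x), and ε ≥ 0. A pMDP policy π_X is expectation ε-optimal for M (i.e., |Val^M(p,r) − E^M_{π_X,i,p}(r)| ≤ ε) if and only if π' = Φ(π_X) = π_X ∘ f⁻¹ is an ε-solution of M' with respect to r' (i.e., |Val^{M'}(r') − E^{M'}_{π',i'}(r')| ≤ ε). -/

import Mathlib

open MeasureTheory ENNReal

namespace PMDPEncoding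

universe u v w

variable {S : Type u} {A : Type v} {X : Type w}

/-- An infinite alternating sequence of state-action pairs
(the `k`-th pair consists of the `k`-th state and the `k`-th action of the run). -/
abbrev RunSeq (S : Type u) (A : Type v) := ℕ → S × A

/-- `ρ` is a run of the MDP with transition function `T`:
all transitions have positive probability. -/
def IsRun (T : S → A → PMF S) (ρ : RunSeq S A) : Prop :=
  ∀ k, 0 < T (ρ k).1 (ρ k).2 (ρ (k + 1)).1

/-- A history: a finite list of state-action pairs followed by a final state. -/
abbrev Hist (S : Type u) (A : Type v) := List (S × A) × S

/-- The first state of a history. -/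
def Hist.first (h : Hist S A) : S :=
  match h.1 with
  | [] => h.2
  | p :: _ => p.1

/-- Auxiliary for `IsHist`: validity of the list part of a history with final state `t`. -/
def IsHistL (T : S → A → PMF S) : List (S × A) → S → Prop
  | [], _ => True
  | (s, a) :: rest, t => 0 < T s a (Hist.first (rest, t)) ∧ IsHistL T rest t

/-- `h` is a history (finite prefix of a run) of the MDP with transition function `T`. -/
def IsHist (T : S → A → PMF S) (h : Hist S A) : Prop := IsHistL T h.1 h.2

/-- The set of runs of the MDP with transition function `T`. -/
def Runs (T : S → A → PMF S) := {ρ : RunSeq S A // IsRun T ρ}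

/-- The set of (raw) sequences having the history `h` as a prefix. -/
def ConeSeq (h : Hist S A) : Set (RunSeq S A) :=
  {ρ | (∀ k, (hk : k < h.1.length) → ρ k = h.1[k]'hk) ∧ (ρ h.1.length).1 = h.2}

/-- The cone of a history: the set of runs with prefix `h`. -/
def Cone (T : S → A → PMF S) (h : Hist S A) : Set (Runs T) :=
  {ρ | ρ.1 ∈ ConeSeq h}

/-- The σ-algebra on runs generated by the cones of histories. -/
instance conesAlg (T : S → A → PMF S) : MeasurableSpace (Runs T) :=
  MeasurableSpace.generateFrom {C | ∃ h : Hist S A, IsHist T h ∧ C = Cone T h}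

/-- Valid histories of an MDP, as a subtype. -/
def HistOf (T : S → A → PMF S) := {h : Hist S A // IsHist T h}

/-- Auxiliary function for the probability of a cone:
`pre` is the prefix of the history processed so far. -/
noncomputable def coneProbAux (T : S → A → PMF S) (π : Hist S A → PMF A) :
    List (S × A) → List (S × A) → S → ℝ≥0∞
  | _, [], _ => 1
  | pre, (s, a) :: rest, t =>
      π (pre, s) a * T s a (Hist.first (rest, t)) *
        coneProbAux T π (pre ++ [(s, a)]) rest t

/-- The probability `i(s₀) · ∏_{k<n} π(s₀a₀…s_k)(a_k) · T(s_k,a_k)(s_{k+1})` that the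
induced measure of policy `π` and initial distribution `i` assigns to the cone of a history. -/
noncomputable def coneProb (T : S → A → PMF S) (i : PMF S) (π : Hist S A → PMF A)
    (h : Hist S A) : ℝ≥0∞ :=
  i h.first * coneProbAux T π [] h.1 h.2

/-- The evaluated transition function `T_x` of a pMDP at parameter point `x`. -/
def evalT (T : S → A → X → PMF S) (x : X) : S → A → PMF S := fun s a => T s a x

/-- Runs of a pMDP: pairs `(x, ρ)` of a parameter value `x` and a run `ρ` of `M(x)`. -/
def RunsX (T : S → A → X → PMF S) := {q : X × RunSeq S A // IsRun (evalT T q.1) q.2}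

/-- Valid histories of a pMDP: pairs `(x, h)` with `h` a history of `M(x)`. -/
def HistX (T : S → A → X → PMF S) := {q : X × Hist S A // IsHist (evalT T q.1) q.2}

/-- The generator set `{x} × Cone(h)` of the σ-algebra on the runs of a pMDP. -/
def ConeX (T : S → A → X → PMF S) (x : X) (h : Hist S A) : Set (RunsX T) :=
  {q | q.1.1 = x ∧ q.1.2 ∈ ConeSeq h}

/-- The σ-algebra on the runs of a pMDP generated by the sets `{x} × Cone(h)`. -/
instance conesXAlg (T : S → A → X → PMF S) : MeasurableSpace (RunsX T) :=
  MeasurableSpace.generateFrom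
    {C | ∃ (x : X) (h : Hist S A), IsHist (evalT T x) h ∧ C = ConeX T x h}

/-- The transition function `T'` of the induced POMDP of a pMDP:
`T'((s,x),a)(s',x') = T(s,a)(x)(s') · δ_x(x')`. -/
noncomputable def indT (T : S → A → X → PMF S) : S × X → A → PMF (S × X) :=
  fun sx a => (T sx.1 a sx.2).map fun s' => (s', sx.2)

/-- The observation function of the induced POMDP: `O(s,x) = s`. -/
def obs : S × X → S := Prod.fst

/-- The observation map extended to histories of the induced POMDP. -/
def obsHist : Hist (S × X) A → Hist S A :=
  fun h => (h.1.map fun p => (p.1.1, p.2), h.2.1)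

/-- The map `f` on raw sequences: `f(x, s₀·a₀·s₁·⋯) = (s₀,x)·a₀·(s₁,x)·⋯`. -/
def fSeq (x : X) (ρ : RunSeq S A) : RunSeq (S × X) A :=
  fun k => (((ρ k).1, x), (ρ k).2)

theorem indT_pos {T : S → A → X → PMF S} {s s' : S} {a : A} {x : X}
    (h : 0 < T s a x s') : 0 < indT T (s, x) a (s', x) := by
  have hmem : (s', x) ∈ ((T s a x).map fun u => (u, x)).support := by
    rw [PMF.support_map]
    exact ⟨s', (PMF.mem_support_iff _ _).2 h.ne', rfl⟩
  exact pos_iff_ne_zero.mpr ((PMF.mem_support_iff _ _).1 hmem)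

/-- The map `f : Runs_X → Runs'` from the runs of a pMDP to the runs of its induced POMDP. -/
def fRun (T : S → A → X → PMF S) (q : RunsX T) : Runs (indT T) :=
  ⟨fSeq q.1.1 q.1.2, fun k => indT_pos (q.2 k)⟩

/-- The map `f` on raw histories: `f(x, s₀·a₀·⋯·s_n) = (s₀,x)·a₀·⋯·(s_n,x)`. -/
def fHistSeq (x : X) (h : Hist S A) : Hist (S × X) A :=
  (h.1.map fun p => ((p.1, x), p.2), (h.2, x))

theorem isHist_fHistSeq (T : S → A → X → PMF S) (x : X) :
    ∀ (l : List (S × A)) (t : S), IsHist (evalT T x) (l, t) →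
      IsHist (indT T) (fHistSeq x (l, t))
  | [], _, _ => trivial
  | (s, a) :: rest, t, hv => by
      obtain ⟨h1, h2⟩ := hv
      have hrec := isHist_fHistSeq T x rest t h2
      refine ⟨?_, hrec⟩
      show 0 < indT T (s, x) a (Hist.first ((rest.map fun p => ((p.1, x), p.2)), (t, x)))
      have hfirst : Hist.first ((rest.map fun p => ((p.1, x), p.2) : List ((S × X) × A)), (t, x)) =
          (Hist.first (rest, t), x) := by
        cases rest <;> rfl
      rw [hfirst]
      exact indT_pos h1

/-- The map `f : Hist_X → Hist'` from the histories of a pMDP to the histories of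
its induced POMDP. -/
def fHistX (T : S → A → X → PMF S) (q : HistX T) : HistOf (indT T) :=
  ⟨fHistSeq q.1.1 q.1.2, isHist_fHistSeq T q.1.1 q.1.2.1 q.1.2.2 q.2⟩

/-- Some run of an MDP: start anywhere, always pick a fixed action, and follow the
support of the transition distributions. -/
noncomputable def someRunSeq (T : S → A → PMF S) (sa : S × A) (a : A) : RunSeq S A :=
  fun k => Nat.rec sa (fun _ ih => ((PMF.support_nonempty (T ih.1 ih.2)).some, a)) k

theorem someRunSeq_isRun (T : S → A → PMF S) (sa : S × A) (a : A) :
    IsRun T (someRunSeq T sa a) := by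
  intro k
  exact pos_iff_ne_zero.mpr <| (PMF.mem_support_iff _ _).1 <|
    (PMF.support_nonempty (T (someRunSeq T sa a k).1 (someRunSeq T sa a k).2)).some_mem

instance instNonemptyRuns [Nonempty S] [Nonempty A] (T : S → A → PMF S) :
    Nonempty (Runs T) :=
  ⟨⟨someRunSeq T (Classical.arbitrary S, Classical.arbitrary A) (Classical.arbitrary A),
    someRunSeq_isRun _ _ _⟩⟩

instance instNonemptyRunsX [Nonempty S] [Nonempty A] [Nonempty X] (T : S → A → X → PMF S) :
    Nonempty (RunsX T) :=
  ⟨⟨(Classical.arbitrary X,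
      someRunSeq (evalT T (Classical.arbitrary X))
        (Classical.arbitrary S, Classical.arbitrary A) (Classical.arbitrary A)),
    someRunSeq_isRun _ _ _⟩⟩

instance instNonemptyHistX [Nonempty S] [Nonempty X] (T : S → A → X → PMF S) :
    Nonempty (HistX T) :=
  ⟨⟨(Classical.arbitrary X, ([], Classical.arbitrary S)), trivial⟩⟩

instance instNonemptyHistOf [Nonempty S] (T : S → A → PMF S) :
    Nonempty (HistOf T) :=
  ⟨⟨([], Classical.arbitrary S), trivial⟩⟩

section Aux

variable {T : S → A → X → PMF S}

lemma indT_apply (T : S → A → X → PMF S) (s s' : S) (a : A) (x : X) :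
    indT T (s, x) a (s', x) = T s a x s' := by
  rw [indT, PMF.map_apply]
  rw [tsum_eq_single s' (fun u hu => by simp [Prod.ext_iff, Ne.symm hu])]
  simp

lemma indT_pos_elim {s : S} {x : X} {a : A} {c : S × X}
    (h : 0 < indT T (s, x) a c) : c.2 = x ∧ 0 < T s a x c.1 := by
  have hc : c ∈ ((T s a x).map fun u => (u, x)).support :=
    (PMF.mem_support_iff _ _).2 h.ne'
  rw [PMF.support_map] at hc
  obtain ⟨u, hu, hcu⟩ := hc
  subst hcu
  exact ⟨rfl, pos_iff_ne_zero.mpr ((PMF.mem_support_iff _ _).1 hu)⟩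

lemma first_map (l : List (S × A)) (t : S) (x : X) :
    Hist.first ((l.map fun p => ((p.1, x), p.2) : List ((S × X) × A)), (t, x)) =
      (Hist.first (l, t), x) := by
  cases l <;> rfl

lemma fHistSeq_first (x : X) (h : Hist S A) :
    (fHistSeq x h).2.2 = x := rfl

lemma hist_first_fHistSeq (x : X) (h : Hist S A) :
    Hist.first (fHistSeq x h) = (Hist.first h, x) := by
  obtain ⟨l, t⟩ := h; exact first_map l t x

lemma obsHist_fHistSeq (x : X) (h : Hist S A) :
    obsHist (fHistSeq x h) = h := by
  obtain ⟨l, t⟩ := h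
  simp [obsHist, fHistSeq, Function.comp_def]

lemma isHistL_snoc {T0 : S → A → PMF S} :
    ∀ (pre : List (S × A)) {s : S} {a : A} {u : S}, IsHistL T0 pre s → 0 < T0 s a u →
      IsHistL T0 (pre ++ [(s, a)]) u
  | [], s, a, u, _, htr => ⟨htr, trivial⟩
  | (s0, a0) :: pre, s, a, u, ⟨h1, h2⟩, htr => by
      refine ⟨?_, isHistL_snoc pre h2 htr⟩
      have : Hist.first (pre ++ [(s, a)], u) = Hist.first (pre, s) := by
        cases pre <;> rfl
      show 0 < T0 s0 a0 (Hist.first (pre ++ [(s, a)], u))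
      rwa [this]
  
lemma indT_hist_decode :
    ∀ (l' : List ((S × X) × A)) (t' : S × X), IsHistL (indT T) l' t' →
      ∃ (x : X) (l : List (S × A)) (t : S),
        l' = l.map (fun p => ((p.1, x), p.2)) ∧ t' = (t, x) ∧ IsHistL (evalT T x) l t
  | [], t', _ => ⟨t'.2, [], t'.1, by simp, by simp, trivial⟩
  | ((s, x0), a) :: rest, t', hv => by
      obtain ⟨h1, h2⟩ := hv
      obtain ⟨x, l, t, hl, ht, hvl⟩ := indT_hist_decode rest t' h2
      subst hl; subst ht
      rw [first_map] at h1
      obtain ⟨hx, hT⟩ := indT_pos_elim h1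
      have hx' : x = x0 := hx
      subst hx'
      exact ⟨x, (s, a) :: l, t, by simp, rfl, ⟨hT, hvl⟩⟩

end Aux
section Aux2

variable {T : S → A → X → PMF S}

lemma run_snd_const {ρ' : RunSeq (S × X) A} (h : IsRun (indT T) ρ') :
    ∀ k, (ρ' k).1.2 = (ρ' 0).1.2 := by
  intro k
  induction k with
  | zero => rfl
  | succ n ih =>
      have := h n
      have h2 := indT_pos_elim (s := (ρ' n).1.1) (x := (ρ' n).1.2) (a := (ρ' n).2)
        (c := (ρ' (n+1)).1) (by simpa using this)
      rw [h2.1, ih]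

lemma fRun_injective (T : S → A → X → PMF S) : Function.Injective (fRun T) := by
  rintro ⟨⟨x1, ρ1⟩, h1⟩ ⟨⟨x2, ρ2⟩, h2⟩ heq
  have heq' : fSeq x1 ρ1 = fSeq x2 ρ2 := congrArg Subtype.val heq
  have hx : x1 = x2 := congrArg (fun g => (g 0).1.2) heq'
  subst hx
  have hρ : ρ1 = ρ2 := by
    funext k
    have := congrFun heq' k
    have e1 : (ρ1 k).1 = (ρ2 k).1 := congrArg (fun p => p.1.1) this
    have e2 : (ρ1 k).2 = (ρ2 k).2 := congrArg (fun p => p.2) this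
    exact Prod.ext_iff.mpr ⟨e1, e2⟩
  subst hρ; rfl

lemma fRun_surjective (T : S → A → X → PMF S) : Function.Surjective (fRun T) := by
  rintro ⟨ρ', hρ'⟩
  refine ⟨⟨((ρ' 0).1.2, fun k => ((ρ' k).1.1, (ρ' k).2)), ?_⟩, ?_⟩
  · intro k
    have hk := hρ' k
    have hconst := run_snd_const hρ' k
    have hconst' := run_snd_const hρ' (k + 1)
    have e1 : ((ρ' k).1.1, (ρ' 0).1.2) = (ρ' k).1 := Prod.ext_iff.mpr ⟨rfl, hconst.symm⟩
    have e2 : ((ρ' (k+1)).1.1, (ρ' 0).1.2) = (ρ' (k+1)).1 := Prod.ext_iff.mpr ⟨rfl, hconst'.symm⟩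
    have hpos : 0 < indT T ((ρ' k).1.1, (ρ' 0).1.2) (ρ' k).2 ((ρ' (k+1)).1.1, (ρ' 0).1.2) := by
      rw [e1, e2]; exact hk
    exact (indT_pos_elim hpos).2
  · apply Subtype.ext
    funext k
    have hconst := run_snd_const hρ' k
    show (((ρ' k).1.1, (ρ' 0).1.2), (ρ' k).2) = ρ' k
    rw [← hconst]

lemma fRun_leftInv (T : S → A → X → PMF S) [Nonempty S] [Nonempty A] [Nonempty X]
    (q : RunsX T) : Function.invFun (fRun T) (fRun T q) = q :=
  Function.leftInverse_invFun (fRun_injective T) q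

lemma fRun_preimage_cone (x : X) (h : Hist S A) :
    fRun T ⁻¹' Cone (indT T) (fHistSeq x h) = ConeX T x h := by
  obtain ⟨l, t⟩ := h
  ext ⟨⟨x1, ρ⟩, hρ⟩
  simp only [Cone, ConeX, ConeSeq, fRun, fHistSeq, fSeq, Set.mem_preimage, Set.mem_setOf_eq,
    List.length_map]
  constructor
  · rintro ⟨h1, h2⟩
    have hx : x1 = x := congrArg Prod.snd h2
    subst hx
    refine ⟨rfl, ?_, congrArg Prod.fst h2⟩
    intro k hk
    have := h1 k hk
    rw [List.getElem_map] at this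
    have e1 : (ρ k).1 = l[k].1 := congrArg (fun p => p.1.1) this
    have e2 : (ρ k).2 = l[k].2 := congrArg (fun p => p.2) this
    exact Prod.ext_iff.mpr ⟨e1, e2⟩
  · rintro ⟨hx, h1, h2⟩
    subst hx
    constructor
    · intro k hk
      rw [List.getElem_map]
      exact congrArg (fun q : S × A => ((q.1, x1), q.2)) (h1 k hk)
    · exact Prod.ext_iff.mpr ⟨h2, rfl⟩

lemma measurable_fRun (T : S → A → X → PMF S) : Measurable (fRun T) := by
  apply measurable_generateFrom
  rintro C ⟨h', hvh', rfl⟩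
  obtain ⟨l', t'⟩ := h'
  obtain ⟨x, l, t, rfl, rfl, hv⟩ := indT_hist_decode l' t' hvh'
  rw [show ((List.map (fun p => ((p.1, x), p.2)) l : List ((S × X) × A)), (t, x)) =
      fHistSeq x (l, t) from rfl, fRun_preimage_cone]
  exact MeasurableSpace.measurableSet_generateFrom ⟨x, (l, t), hv, rfl⟩

lemma measurable_invFRun (T : S → A → X → PMF S) [Nonempty S] [Nonempty A] [Nonempty X] :
    Measurable (Function.invFun (fRun T)) := by
  apply measurable_generateFrom
  rintro C ⟨x, h, hv, rfl⟩
  have hinv : Function.invFun (fRun T) ⁻¹' ConeX T x h = Cone (indT T) (fHistSeq x h) := by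
    rw [← fRun_preimage_cone (T := T) x h]
    rw [Set.preimage_preimage]
    have : ∀ ρ, fRun T (Function.invFun (fRun T) ρ) = ρ :=
      Function.rightInverse_invFun (fRun_surjective T)
    simp [this]
  rw [hinv]
  exact MeasurableSpace.measurableSet_generateFrom
    ⟨fHistSeq x h, isHist_fHistSeq T x h.1 h.2 hv, rfl⟩

end Aux2
section Aux3

variable {T : S → A → X → PMF S}

lemma coneSeq_subset {h1 h2 : Hist S A} {ρ0 : RunSeq S A}
    (h01 : ρ0 ∈ ConeSeq h1) (h02 : ρ0 ∈ ConeSeq h2) (hle : h1.1.length ≤ h2.1.length) :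
    ConeSeq h2 ⊆ ConeSeq h1 := by
  intro ρ hρ
  obtain ⟨ha1, hb1⟩ := h01
  obtain ⟨ha2, hb2⟩ := h02
  obtain ⟨ha, hb⟩ := hρ
  constructor
  · intro k hk
    rw [← ha1 k hk]
    rw [ha2 k (lt_of_lt_of_le hk hle), ← ha k (lt_of_lt_of_le hk hle)]
  · rcases lt_or_eq_of_le hle with hlt | heq
    · rw [ha h1.1.length hlt, ← ha2 h1.1.length hlt, hb1]
    · rw [heq, hb, ← hb2, ← heq, hb1]

lemma isPiSystem_cones (T0 : S → A → PMF S) :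
    IsPiSystem {C : Set (Runs T0) | ∃ h : Hist S A, IsHist T0 h ∧ C = Cone T0 h} := by
  rintro C1 ⟨h1, hv1, rfl⟩ C2 ⟨h2, hv2, rfl⟩ hne
  obtain ⟨ρ0, hρ01, hρ02⟩ := hne
  rcases le_total h1.1.length h2.1.length with hle | hle
  · have hsub : Cone T0 h2 ⊆ Cone T0 h1 := fun ρ hρ => coneSeq_subset hρ01 hρ02 hle hρ
    refine ⟨h2, hv2, ?_⟩
    rw [Set.inter_eq_right.mpr hsub]
  · have hsub : Cone T0 h1 ⊆ Cone T0 h2 := fun ρ hρ => coneSeq_subset hρ02 hρ01 hle hρ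
    refine ⟨h1, hv1, ?_⟩
    rw [Set.inter_eq_left.mpr hsub]

lemma coneProbAux_eq {x : X} {π'' : Hist (S × X) A → PMF A} {σx : Hist S A → PMF A}
    (hmatch : ∀ h : Hist S A, IsHist (evalT T x) h → π'' (fHistSeq x h) = σx h) :
    ∀ (l pre : List (S × A)) (t : S), IsHistL (evalT T x) l t →
      IsHistL (evalT T x) pre (Hist.first (l, t)) →
      coneProbAux (indT T) π'' (pre.map fun p => ((p.1, x), p.2))
          (l.map fun p => ((p.1, x), p.2)) (t, x) =
        coneProbAux (evalT T x) σx pre l t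
  | [], pre, t, _, _ => rfl
  | (s, a) :: rest, pre, t, hl, hpre => by
      obtain ⟨h1, h2⟩ := hl
      have hfirst : Hist.first ((s, a) :: rest, t) = s := rfl
      rw [hfirst] at hpre
      have hπ : π'' ((pre.map fun p => ((p.1, x), p.2)), (s, x)) a = σx (pre, s) a := by
        rw [show ((pre.map fun p => ((p.1, x), p.2) : List ((S × X) × A)), ((s : S), x)) =
          fHistSeq x (pre, s) from rfl, hmatch (pre, s) hpre]
      have hT : indT T (s, x) a
          (Hist.first ((rest.map fun p => ((p.1, x), p.2) : List ((S × X) × A)), (t, x))) =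
          evalT T x s a (Hist.first (rest, t)) := by
        rw [first_map, indT_apply]; rfl
      have hrec := coneProbAux_eq hmatch rest (pre ++ [(s, a)]) t h2
        (isHistL_snoc pre hpre h1)
      show π'' ((pre.map fun p => ((p.1, x), p.2)), (s, x)) a *
          indT T (s, x) a (Hist.first ((rest.map fun p => ((p.1, x), p.2)), (t, x))) *
          coneProbAux (indT T) π''
            ((pre.map fun p => ((p.1, x), p.2)) ++ [((s, x), a)])
            (rest.map fun p => ((p.1, x), p.2)) (t, x) =
        σx (pre, s) a * evalT T x s a (Hist.first (rest, t)) *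
          coneProbAux (evalT T x) σx (pre ++ [(s, a)]) rest t
      rw [hπ, hT, ← hrec, List.map_append]
      rfl

lemma coneProb_eq {i : PMF S} {p : PMF X} {i' : PMF (S × X)}
    (hi' : ∀ s x, i' (s, x) = i s * p x)
    {x : X} {π'' : Hist (S × X) A → PMF A} {σx : Hist S A → PMF A}
    (hmatch : ∀ h : Hist S A, IsHist (evalT T x) h → π'' (fHistSeq x h) = σx h)
    (h : Hist S A) (hv : IsHist (evalT T x) h) :
    coneProb (indT T) i' π'' (fHistSeq x h) = p x * coneProb (evalT T x) i σx h := by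
  obtain ⟨l, t⟩ := h
  unfold coneProb
  rw [hist_first_fHistSeq]
  have : Hist.first ((l, t) : Hist S A) = (Hist.first (l, t)) := rfl
  rw [hi']
  rw [show (fHistSeq x (l, t)).1 = l.map fun p => ((p.1, x), p.2) from rfl,
    show (fHistSeq x (l, t)).2 = (t, x) from rfl]
  have hx := coneProbAux_eq hmatch l [] t hv trivial
  simp only [List.map_nil] at hx
  rw [hx]
  ring

end Aux3
section Aux4

set_option linter.unusedSectionVars false
variable [Nonempty S] [Nonempty A] [Nonempty X]
variable {T : S → A → X → PMF S} {i : PMF S} {p : PMF X} {i' : PMF (S × X)}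

lemma measure_map_eq
    (hi' : ∀ s x, i' (s, x) = i s * p x)
    {PM : (X × Hist S A → PMF A) → Measure (RunsX T)}
    (hPMprob : ∀ πX, IsProbabilityMeasure (PM πX))
    (hPM : ∀ (πX : X × Hist S A → PMF A) (x : X) (h : Hist S A), IsHist (evalT T x) h →
      PM πX (ConeX T x h) = p x * coneProb (evalT T x) i (fun h => πX (x, h)) h)
    {PO : (Hist (S × X) A → PMF A) → Measure (Runs (indT T))}
    (hPOprob : ∀ π', IsProbabilityMeasure (PO π'))
    (hPO : ∀ (π' : Hist (S × X) A → PMF A) (h' : Hist (S × X) A), IsHist (indT T) h' →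
      PO π' (Cone (indT T) h') = coneProb (indT T) i' π' h')
    (σ : X × Hist S A → PMF A) (π'' : Hist (S × X) A → PMF A)
    (hmatch : ∀ (x : X) (h : Hist S A), IsHist (evalT T x) h →
      π'' (fHistSeq x h) = σ (x, h)) :
    PO π'' = (PM σ).map (fRun T) := by
  haveI := hPMprob σ
  haveI := hPOprob π''
  haveI : IsProbabilityMeasure ((PM σ).map (fRun T)) :=
    MeasureTheory.Measure.isProbabilityMeasure_map (measurable_fRun T).aemeasurable
  refine MeasureTheory.ext_of_generate_finite _ rfl (isPiSystem_cones (indT T)) ?_ ?_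
  · rintro C ⟨h', hv', rfl⟩
    have hms : MeasurableSet (Cone (indT T) h') :=
      MeasurableSpace.measurableSet_generateFrom ⟨h', hv', rfl⟩
    obtain ⟨l', t'⟩ := h'
    obtain ⟨x, l, t, rfl, rfl, hv⟩ := indT_hist_decode l' t' hv'
    rw [hPO _ _ hv', MeasureTheory.Measure.map_apply (measurable_fRun T) hms]
    rw [show ((List.map (fun p => ((p.1, x), p.2)) l : List ((S × X) × A)), ((t : S), x)) =
      fHistSeq x (l, t) from rfl, fRun_preimage_cone, hPM σ x (l, t) hv]
    exact coneProb_eq hi' (fun h hh => hmatch x h hh) (l, t) hv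
  · simp

lemma integral_eq
    (hi' : ∀ s x, i' (s, x) = i s * p x)
    {PM : (X × Hist S A → PMF A) → Measure (RunsX T)}
    (hPMprob : ∀ πX, IsProbabilityMeasure (PM πX))
    (hPM : ∀ (πX : X × Hist S A → PMF A) (x : X) (h : Hist S A), IsHist (evalT T x) h →
      PM πX (ConeX T x h) = p x * coneProb (evalT T x) i (fun h => πX (x, h)) h)
    {PO : (Hist (S × X) A → PMF A) → Measure (Runs (indT T))}
    (hPOprob : ∀ π', IsProbabilityMeasure (PO π'))
    (hPO : ∀ (π' : Hist (S × X) A → PMF A) (h' : Hist (S × X) A), IsHist (indT T) h' →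
      PO π' (Cone (indT T) h') = coneProb (indT T) i' π' h')
    (r : RunsX T → ℝ) (hr : Measurable r)
    (σ : X × Hist S A → PMF A) (π'' : Hist (S × X) A → PMF A)
    (hmatch : ∀ (x : X) (h : Hist S A), IsHist (evalT T x) h →
      π'' (fHistSeq x h) = σ (x, h)) :
    ∫ ρ, r (Function.invFun (fRun T) ρ) ∂(PO π'') = ∫ q, r q ∂(PM σ) := by
  rw [measure_map_eq hi' hPMprob hPM hPOprob hPO σ π'' hmatch]
  have hg : MeasureTheory.AEStronglyMeasurable (fun ρ => r (Function.invFun (fRun T) ρ))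
      ((PM σ).map (fRun T)) := (hr.comp (measurable_invFRun T)).aestronglyMeasurable
  rw [MeasureTheory.integral_map (measurable_fRun T).aemeasurable hg]
  simp only [fRun_leftInv]

end Aux4
lemma obsHist_enc (x : X) (l : List (S × A)) (t : S) :
    obsHist ((l.map fun p => ((p.1, x), p.2) : List ((S × X) × A)), (t, x)) = (l, t) :=
  obsHist_fHistSeq x (l, t)
/-- Let `M` be a pMDP with induced POMDP `M'`, `p ∈ Dist(X)`,
`r : Runs_X → ℝ` a measurable objective, `r' = r ∘ f⁻¹`, `i'(s,x) = i(s)·p(x)`, and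
`ε ≥ 0`. A pMDP policy `π_X` is expectation ε-optimal for `M`
(`|Val^M(p,r) − E^M_{π_X,i,p}(r)| ≤ ε`) if and only if `π' = Φ(π_X) = π_X ∘ f⁻¹` is an
ε-solution of `M'` with respect to `r'` (`|Val^{M'}(r') − E^{M'}_{π',i'}(r')| ≤ ε`). -/
theorem eps_optimal_correspondence [Nonempty S] [Nonempty A] [Nonempty X]
    (T : S → A → X → PMF S) (i : PMF S) (p : PMF X)
    (i' : PMF (S × X)) (hi' : ∀ s x, i' (s, x) = i s * p x)
    (PM : (X × Hist S A → PMF A) → Measure (RunsX T))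
    (hPMprob : ∀ πX, IsProbabilityMeasure (PM πX))
    (hPM : ∀ (πX : X × Hist S A → PMF A) (x : X) (h : Hist S A), IsHist (evalT T x) h →
      PM πX (ConeX T x h) = p x * coneProb (evalT T x) i (fun h => πX (x, h)) h)
    (PO : (Hist (S × X) A → PMF A) → Measure (Runs (indT T)))
    (hPOprob : ∀ π', IsProbabilityMeasure (PO π'))
    (hPO : ∀ (π' : Hist (S × X) A → PMF A) (h' : Hist (S × X) A), IsHist (indT T) h' →
      PO π' (Cone (indT T) h') = coneProb (indT T) i' π' h')
    (r : RunsX T → ℝ) (hr : Measurable r)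
    (πX : X × Hist S A → PMF A)
    (hind : ∀ (x y : X) (h : Hist S A), IsHist (evalT T x) h → IsHist (evalT T y) h →
      πX (x, h) = πX (y, h))
    (π' : Hist (S × X) A → PMF A)
    (hobs : ∀ h1 h2 : Hist (S × X) A, IsHist (indT T) h1 → IsHist (indT T) h2 →
      obsHist h1 = obsHist h2 → π' h1 = π' h2)
    (hPhi : ∀ (x : X) (h : Hist S A), IsHist (evalT T x) h → π' (fHistSeq x h) = πX (x, h))
    (ε : ℝ) (hε : 0 ≤ ε) :
    |(⨆ σ : {π : X × Hist S A → PMF A // ∀ (x y : X) (h : Hist S A),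
          IsHist (evalT T x) h → IsHist (evalT T y) h → π (x, h) = π (y, h)},
        ∫ q, r q ∂(PM σ.1)) - ∫ q, r q ∂(PM πX)| ≤ ε ↔
    |(⨆ σ' : {π : Hist (S × X) A → PMF A // ∀ h1 h2 : Hist (S × X) A,
          IsHist (indT T) h1 → IsHist (indT T) h2 → obsHist h1 = obsHist h2 → π h1 = π h2},
        ∫ ρ, r (Function.invFun (fRun T) ρ) ∂(PO σ'.1)) -
      ∫ ρ, r (Function.invFun (fRun T) ρ) ∂(PO π')| ≤ ε := by
  classical
  have hE : ∫ ρ, r (Function.invFun (fRun T) ρ) ∂(PO π') = ∫ q, r q ∂(PM πX) :=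
    integral_eq hi' hPMprob hPM hPOprob hPO r hr πX π' hPhi
  have hrange : Set.range (fun σ : {π : X × Hist S A → PMF A // ∀ (x y : X) (h : Hist S A),
        IsHist (evalT T x) h → IsHist (evalT T y) h → π (x, h) = π (y, h)} =>
        ∫ q, r q ∂(PM σ.1)) =
      Set.range (fun σ' : {π : Hist (S × X) A → PMF A // ∀ h1 h2 : Hist (S × X) A,
        IsHist (indT T) h1 → IsHist (indT T) h2 → obsHist h1 = obsHist h2 → π h1 = π h2} =>
        ∫ ρ, r (Function.invFun (fRun T) ρ) ∂(PO σ'.1)) := by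
    apply Set.Subset.antisymm
    · rintro _ ⟨σ, rfl⟩
      have hmatchΦ : ∀ (x : X) (h : Hist S A), IsHist (evalT T x) h →
          (fun h' : Hist (S × X) A => σ.1 (h'.2.2, obsHist h')) (fHistSeq x h) = σ.1 (x, h) := by
        intro x h _
        show σ.1 ((fHistSeq x h).2.2, obsHist (fHistSeq x h)) = σ.1 (x, h)
        rw [obsHist_fHistSeq, fHistSeq_first]
      refine ⟨⟨fun h' => σ.1 (h'.2.2, obsHist h'), ?_⟩, ?_⟩
      · intro h1 h2 hv1 hv2 hoe
        obtain ⟨l1, t1⟩ := h1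
        obtain ⟨x1, k1, u1, rfl, rfl, hvk1⟩ := indT_hist_decode l1 t1 hv1
        obtain ⟨l2, t2⟩ := h2
        obtain ⟨x2, k2, u2, rfl, rfl, hvk2⟩ := indT_hist_decode l2 t2 hv2
        simp only [obsHist_enc] at hoe ⊢
        cases hoe
        exact σ.2 x1 x2 (k1, u1) hvk1 hvk2
      · show (∫ ρ, r (Function.invFun (fRun T) ρ)
            ∂(PO (fun h' => σ.1 (h'.2.2, obsHist h')))) = ∫ q, r q ∂(PM σ.1)
        exact integral_eq hi' hPMprob hPM hPOprob hPO r hr σ.1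
          (fun h' => σ.1 (h'.2.2, obsHist h')) hmatchΦ
    · rintro _ ⟨σ', rfl⟩
      refine ⟨⟨fun q => σ'.1 (fHistSeq q.1 q.2), ?_⟩, ?_⟩
      · rintro x y ⟨l, t⟩ hx hy
        exact σ'.2 _ _ (isHist_fHistSeq T x l t hx) (isHist_fHistSeq T y l t hy)
          (by rw [obsHist_fHistSeq, obsHist_fHistSeq])
      · show (∫ q, r q ∂(PM (fun q => σ'.1 (fHistSeq q.1 q.2)))) =
            ∫ ρ, r (Function.invFun (fRun T) ρ) ∂(PO σ'.1)
        exact (integral_eq hi' hPMprob hPM hPOprob hPO r hr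
          (fun q => σ'.1 (fHistSeq q.1 q.2)) σ'.1 (fun x h _ => rfl)).symm
  rw [← sSup_range, ← sSup_range, hrange, hE]

end PMDPEncoding
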